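/- Suppose a triangular array of symmetric nonnegative weights p_n(i,j) on {1,...,n}² satisfies: for any J_n ⊆ {1,...,n} with |J_n|/n → 0, one has (1/n)·∑_{i ∈ J_n} ∑_{j=1}^n p_n(i,j) → 0. Then for every ε ∈ (0,1) there exist C < ∞ and subsets K_n ⊆ {1,...,n} with |K_n| ≥ (1−ε)n such that ∑_{j=1}^n p_n(i,j) ≤ C for all n and all i ∈ K_n. -/

import Mathlib

open Filter Finset

/-- Almost bounded rows: if a triangular array of symmetric nonnegative weights
has no heavy sparse row sets (for every `J_n` with `|J_n|/n → 0` one has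
`(1/n)∑_{i∈J_n}∑_j p_n(i,j) → 0`), then for every `ε ∈ (0,1)` there are `C < ∞`
and sets `K_n` with `|K_n| ≥ (1−ε)n` on which row sums are bounded by `C`. -/
theorem almost_bounded_rows (p : (n : ℕ) → Fin n → Fin n → ℝ)
    (hsymm : ∀ n i j, p n i j = p n j i)
    (hnonneg : ∀ n i j, 0 ≤ p n i j)
    (hmargin : ∀ J : (n : ℕ) → Finset (Fin n),
      Tendsto (fun n => ((J n).card : ℝ) / n) atTop (nhds 0) →
      Tendsto (fun n => (∑ i ∈ J n, ∑ j, p n i j) / n) atTop (nhds 0)) :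
    ∀ ε : ℝ, 0 < ε → ε < 1 →
      ∃ C : ℝ, ∃ K : (n : ℕ) → Finset (Fin n),
        (∀ n, (1 - ε) * n ≤ ((K n).card : ℝ)) ∧
        (∀ n, ∀ i ∈ K n, ∑ j, p n i j ≤ C) := by
  classical
  intro ε hε0 hε1
  by_contra hcon
  push_neg at hcon
  set rs : (n : ℕ) → Fin n → ℝ := fun n i => ∑ j, p n i j with hrsdef
  have hrsnn : ∀ n i, 0 ≤ rs n i := fun n i => Finset.sum_nonneg fun j _ => hnonneg n i j
  -- Step 1: for every C there is some n with few rows bounded by C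
  have h1 : ∀ C : ℝ, ∃ n : ℕ,
      (((univ.filter (fun i => rs n i ≤ C)).card : ℝ)) < (1 - ε) * n := by
    intro C
    by_contra h'
    push_neg at h'
    obtain ⟨n, i, hiK, hiC⟩ := hcon C (fun n => univ.filter (fun i => rs n i ≤ C)) h'
    exact absurd (Finset.mem_filter.mp hiK).2 (not_le.mpr hiC)
  -- Step 2: for every level k and every N there is n ≥ N with a heavy set of size > εn
  have h2 : ∀ (k N : ℕ), ∃ n, N ≤ n ∧
      ε * n < ((univ.filter (fun i => (k : ℝ) < rs n i)).card : ℝ) := by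
    intro k N
    set S : ℝ := ∑ m ∈ Finset.range (N + 1), ∑ i, rs m i with hSdef
    obtain ⟨n, hn⟩ := h1 (max (k : ℝ) S)
    have hbig : ∀ m, m ≤ N → ∀ i : Fin m, rs m i ≤ max (k : ℝ) S := by
      intro m hm i
      refine le_trans ?_ (le_max_right _ _)
      refine le_trans (Finset.single_le_sum (fun j _ => hrsnn m j) (mem_univ i)) ?_
      exact Finset.single_le_sum (f := fun m => ∑ i, rs m i)
        (fun m _ => Finset.sum_nonneg fun i _ => hrsnn m i)
        (Finset.mem_range.mpr (Nat.lt_succ_of_le hm))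
    have hnN : N < n := by
      by_contra hle
      push_neg at hle
      have huniv : univ.filter (fun i => rs n i ≤ max (k : ℝ) S) = univ :=
        Finset.filter_true_of_mem fun i _ => hbig n hle i
      rw [huniv] at hn
      have hcard : ((univ : Finset (Fin n)).card : ℝ) = n := by simp
      rw [hcard] at hn
      nlinarith [show (0:ℝ) ≤ (n:ℝ) from Nat.cast_nonneg n]
    refine ⟨n, le_of_lt hnN, ?_⟩
    have hsplit : (univ.filter (fun i => rs n i ≤ (k : ℝ))).card
        + (univ.filter (fun i => (k : ℝ) < rs n i)).card = n := by
      have := Finset.card_filter_add_card_filter_not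
        (s := (univ : Finset (Fin n))) (p := fun i => rs n i ≤ (k : ℝ))
      simpa [not_le] using this
    have hmono : (univ.filter (fun i => rs n i ≤ (k : ℝ))).card
        ≤ (univ.filter (fun i => rs n i ≤ max (k : ℝ) S)).card := by
      apply Finset.card_le_card
      exact Finset.monotone_filter_right _ fun i _ hi => le_trans hi (le_max_left _ _)
    have h3 : ((univ.filter (fun i => rs n i ≤ (k : ℝ))).card : ℝ) < (1 - ε) * n :=
      lt_of_le_of_lt (by exact_mod_cast hmono) hn
    have h4 : ((univ.filter (fun i => rs n i ≤ (k : ℝ))).card : ℝ)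
        + ((univ.filter (fun i => (k : ℝ) < rs n i)).card : ℝ) = n := by
      exact_mod_cast hsplit
    linarith
  choose f hf1 hf2 using h2
  -- Step 3: strictly monotone sequence with heavy sets at increasing levels
  set seq : ℕ → ℕ := fun k => Nat.rec (f 1 0) (fun k ih => f (k + 2) (ih + 1)) k with hseqdef
  have hseq_succ : ∀ k, seq (k + 1) = f (k + 2) (seq k + 1) := fun k => rfl
  have hseq_mono : StrictMono seq := by
    apply strictMono_nat_of_lt_succ
    intro k
    rw [hseq_succ]
    exact lt_of_lt_of_le (Nat.lt_succ_self _) (hf1 (k + 2) (seq k + 1))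
  have hseq_spec : ∀ k, ε * seq k <
      ((univ.filter (fun i => ((k + 1 : ℕ) : ℝ) < rs (seq k) i)).card : ℝ) := by
    intro k
    cases k with
    | zero => exact hf2 1 0
    | succ k => exact hf2 (k + 2) (seq k + 1)
  have hnpos : ∀ k, 0 < seq k := by
    intro k
    rcases Nat.eq_zero_or_pos (seq k) with h | h
    · exfalso
      have := hseq_spec k
      rw [h] at this
      simp at this
    · exact h
  -- Step 4: choose subsets A k of the heavy sets
  have hminle : ∀ k, min ((univ.filter (fun i => ((k + 1 : ℕ) : ℝ) < rs (seq k) i)).card)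
      (seq k / (k + 1) + 1) ≤ (univ.filter (fun i => ((k + 1 : ℕ) : ℝ) < rs (seq k) i)).card :=
    fun k => min_le_left _ _
  choose A hA1 hA2 using fun k =>
    Finset.exists_subset_card_eq (s := univ.filter (fun i => ((k + 1 : ℕ) : ℝ) < rs (seq k) i))
      (hminle k)
  have hAcard_le : ∀ k, (A k).card ≤ seq k / (k + 1) + 1 := by
    intro k; rw [hA2]; exact min_le_right _ _
  have hsumA : ∀ k, ε * seq k ≤ ∑ i ∈ A k, rs (seq k) i := by
    intro k
    have hterm : ∀ i ∈ A k, ((k + 1 : ℕ) : ℝ) ≤ rs (seq k) i :=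
      fun i hi => le_of_lt (Finset.mem_filter.mp (hA1 k hi)).2
    have hsum2 : ((A k).card : ℝ) * ((k + 1 : ℕ) : ℝ) ≤ ∑ i ∈ A k, rs (seq k) i := by
      calc ((A k).card : ℝ) * ((k + 1 : ℕ) : ℝ) = ∑ _i ∈ A k, ((k + 1 : ℕ) : ℝ) := by
            rw [Finset.sum_const, nsmul_eq_mul]
        _ ≤ ∑ i ∈ A k, rs (seq k) i := Finset.sum_le_sum hterm
    refine le_trans ?_ hsum2
    rcases le_total ((univ.filter (fun i => ((k + 1 : ℕ) : ℝ) < rs (seq k) i)).card)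
        (seq k / (k + 1) + 1) with h | h
    · rw [hA2, min_eq_left h]
      have hspec := hseq_spec k
      have h1' : (1 : ℝ) ≤ ((k + 1 : ℕ) : ℝ) := by exact_mod_cast Nat.succ_le_succ (Nat.zero_le k)
      nlinarith [show (0:ℝ) ≤ (((univ.filter (fun i => ((k + 1 : ℕ) : ℝ) < rs (seq k) i)).card : ℕ) : ℝ) from Nat.cast_nonneg _]
    · rw [hA2, min_eq_right h]
      have hnat : seq k < (seq k / (k + 1) + 1) * (k + 1) := by
        have := Nat.lt_div_mul_add (a := seq k) (b := k + 1) (Nat.succ_pos k)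
        calc seq k < seq k / (k + 1) * (k + 1) + (k + 1) := this
          _ = (seq k / (k + 1) + 1) * (k + 1) := by ring
      have hcast : (seq k : ℝ) < ((seq k / (k + 1) + 1 : ℕ) : ℝ) * ((k + 1 : ℕ) : ℝ) := by
        exact_mod_cast hnat
      nlinarith [show (0:ℝ) ≤ ((seq k : ℕ) : ℝ) from Nat.cast_nonneg _]
  -- Step 5: define J
  set J : (n : ℕ) → Finset (Fin n) := fun n =>
    if h : ∃ k, seq k = n then (A h.choose).map (finCongr h.choose_spec).toEmbedding
    else ∅ with hJdef
  have haux : ∀ (k k' : ℕ) (e : seq k' = seq k),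
      ((A k').map (finCongr e).toEmbedding).card = (A k).card ∧
      ∑ i ∈ (A k').map (finCongr e).toEmbedding, rs (seq k) i = ∑ i ∈ A k, rs (seq k) i := by
    intro k k' e
    have hkk : k' = k := hseq_mono.injective e
    subst hkk
    refine ⟨Finset.card_map _, ?_⟩
    rw [Finset.sum_map]
    refine Finset.sum_congr rfl fun i _ => ?_
    have hi : (finCongr e).toEmbedding i = i := Fin.ext (by simp)
    rw [hi]
  have hJr : ∀ k, (J (seq k)).card = (A k).card ∧
      ∑ i ∈ J (seq k), rs (seq k) i = ∑ i ∈ A k, rs (seq k) i := by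
    intro k
    have hex : ∃ k', seq k' = seq k := ⟨k, rfl⟩
    rw [hJdef]
    simp only [dif_pos hex]
    exact haux k hex.choose hex.choose_spec
  have hJempty : ∀ n, (¬ ∃ k, seq k = n) → J n = ∅ := by
    intro n hn
    rw [hJdef]
    simp only [dif_neg hn]
  -- Step 6: the card ratio tends to 0
  have hcard0 : Tendsto (fun n => ((J n).card : ℝ) / n) atTop (nhds 0) := by
    rw [Metric.tendsto_atTop]
    intro δ hδ
    obtain ⟨K, hK⟩ := exists_nat_gt (2 / δ)
    refine ⟨max (seq K + 1) (K + 1), fun n hn => ?_⟩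
    have hn1 : seq K < n := lt_of_lt_of_le (Nat.lt_succ_self _) (le_trans (le_max_left _ _) hn)
    have hn2 : (2 / δ : ℝ) < n := by
      have : (K : ℝ) < n := by
        exact_mod_cast lt_of_lt_of_le (Nat.lt_succ_self K) (le_trans (le_max_right _ _) hn)
      linarith
    have hnpos' : (0 : ℝ) < n := lt_trans (div_pos two_pos hδ) hn2
    rw [Real.dist_eq, sub_zero,
      abs_of_nonneg (div_nonneg (Nat.cast_nonneg _) (le_of_lt hnpos'))]
    by_cases h : ∃ k, seq k = n
    · obtain ⟨k, hk⟩ := h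
      subst hk
      have hkK : K < k := by
        by_contra h'
        push_neg at h'
        exact absurd (hseq_mono.le_iff_le.mpr h') (not_le.mpr hn1)
      have hcardle : ((J (seq k)).card : ℝ) ≤ (seq k : ℝ) / ((k : ℝ) + 1) + 1 := by
        have h1' : ((J (seq k)).card : ℝ) ≤ ((seq k / (k + 1) + 1 : ℕ) : ℝ) := by
          exact_mod_cast (hJr k).1 ▸ hAcard_le k
        refine le_trans h1' ?_
        push_cast
        have := Nat.cast_div_le (α := ℝ) (m := seq k) (n := k + 1)
        push_cast at this
        linarith
      have hkpos : (0 : ℝ) < (k : ℝ) + 1 := by positivity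
      have hratio : ((J (seq k)).card : ℝ) / (seq k) ≤ 1 / ((k : ℝ) + 1) + 1 / (seq k) := by
        rw [div_le_iff₀ hnpos']
        have hexp : (1 / ((k : ℝ) + 1) + 1 / (seq k)) * (seq k)
            = (seq k : ℝ) / ((k : ℝ) + 1) + 1 := by
          field_simp
        rw [hexp]
        exact hcardle
      have hb1 : 1 / ((k : ℝ) + 1) < δ / 2 := by
        have hKk : (2 / δ : ℝ) < (k : ℝ) + 1 := by
          have : (K : ℝ) < (k : ℝ) + 1 := by exact_mod_cast Nat.lt_succ_of_lt hkK
          linarith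
        rw [div_lt_iff₀ hkpos]
        rw [div_lt_iff₀ hδ] at hKk
        nlinarith
      have hb2 : 1 / (seq k : ℝ) < δ / 2 := by
        rw [div_lt_iff₀ hnpos']
        rw [div_lt_iff₀ hδ] at hn2
        nlinarith
      linarith
    · rw [hJempty _ h]
      simpa using hδ
  -- Step 7: contradiction
  have hlim := hmargin J hcard0
  have hcomp : Tendsto (fun k => (∑ i ∈ J (seq k), ∑ j, p (seq k) i j) / (seq k))
      atTop (nhds 0) := hlim.comp hseq_mono.tendsto_atTop
  obtain ⟨k, hk⟩ := (hcomp.eventually (gt_mem_nhds hε0)).exists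
  have hge : ε ≤ (∑ i ∈ J (seq k), ∑ j, p (seq k) i j) / (seq k) := by
    have hnpos' : (0 : ℝ) < (seq k : ℝ) := by exact_mod_cast hnpos k
    rw [le_div_iff₀ hnpos']
    have : ∑ i ∈ J (seq k), ∑ j, p (seq k) i j = ∑ i ∈ A k, rs (seq k) i := (hJr k).2
    rw [this]
    exact hsumA k
  linarith
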